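/- Let G be a k-regular graph on n vertices whose complement is clique-Helly, and let T be an independent set of three vertices of G. Then there are at least k vertices x of G such that x is adjacent in G to at least two vertices of T. -/

import Mathlib

open SimpleGraph

/-- A maximal clique of a simple graph. -/
def IsMaxClique {V : Type*} (G : SimpleGraph V) (s : Set V) : Prop :=
  G.IsClique s ∧ ∀ t : Set V, G.IsClique t → s ⊆ t → s = t

/-- A graph is clique-Helly if every nonempty pairwise intersecting family of
maximal cliques has a common vertex. -/
def CliqueHelly {V : Type*} (G : SimpleGraph V) : Prop :=
  ∀ F : Set (Set V), (∀ s ∈ F, IsMaxClique G s) →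
    (∀ s ∈ F, ∀ t ∈ F, (s ∩ t).Nonempty) → F.Nonempty → (⋂₀ F).Nonempty

lemma exists_maxclique_superset {V : Type*} [Fintype V] (H : SimpleGraph V)
    {s : Set V} (hs : H.IsClique s) : ∃ M, IsMaxClique H M ∧ s ⊆ M := by
  obtain ⟨M, hM, hmax⟩ := Set.Finite.exists_maximalFor (id : Set V → Set V)
    {t | H.IsClique t ∧ s ⊆ t} (Set.toFinite _) ⟨s, hs, subset_rfl⟩
  exact ⟨M, ⟨hM.1, fun t ht hsub => Set.Subset.antisymm hsub (hmax ⟨ht, hM.2.trans hsub⟩ hsub)⟩, hM.2⟩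

theorem cotriangle_adjacent_to_at_least_k_vertices
    {V : Type*} [Fintype V]
    (G : SimpleGraph V) [DecidableRel G.Adj] (k : ℕ) (hk : G.IsRegularOfDegree k)
    (hH : CliqueHelly Gᶜ)
    (a b c : V) (hab : a ≠ b) (hac : a ≠ c) (hbc : b ≠ c)
    (nab : ¬ G.Adj a b) (nac : ¬ G.Adj a c) (nbc : ¬ G.Adj b c) :
    k ≤ {x : V | (G.Adj x a ∧ G.Adj x b) ∨ (G.Adj x a ∧ G.Adj x c) ∨
          (G.Adj x b ∧ G.Adj x c)}.ncard := by
  classical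
  set H := Gᶜ with hHdef
  have Hab : H.Adj a b := ⟨hab, nab⟩
  have Hac : H.Adj a c := ⟨hac, nac⟩
  have Hbc : H.Adj b c := ⟨hbc, nbc⟩
  -- the family of maximal cliques of H containing at least two of a,b,c
  set F : Set (Set V) := {M | IsMaxClique H M ∧
    ((a ∈ M ∧ b ∈ M) ∨ (a ∈ M ∧ c ∈ M) ∨ (b ∈ M ∧ c ∈ M))} with hFdef
  have habc : H.IsClique {a, b, c} := by
    intro x hx y hy hxy
    simp only [Set.mem_insert_iff, Set.mem_singleton_iff] at hx hy
    rcases hx with rfl | rfl | rfl <;> rcases hy with rfl | rfl | rfl <;>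
      first
        | exact absurd rfl hxy
        | assumption
        | exact Hab.symm
        | exact Hac.symm
        | exact Hbc.symm
  obtain ⟨M0, hM0, hM0sub⟩ := exists_maxclique_superset H habc
  have hM0F : M0 ∈ F := ⟨hM0, Or.inl ⟨hM0sub (by simp), hM0sub (by simp)⟩⟩
  have hu : (⋂₀ F).Nonempty := by
    apply hH F (fun s hs => hs.1)
    · intro s hs t ht
      rcases hs.2 with ⟨h1, h2⟩ | ⟨h1, h2⟩ | ⟨h1, h2⟩ <;>
        rcases ht.2 with ⟨h1', h2'⟩ | ⟨h1', h2'⟩ | ⟨h1', h2'⟩ <;>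
          first
            | exact ⟨a, h1, h1'⟩
            | exact ⟨b, h1, h2'⟩
            | exact ⟨b, h2, h1'⟩
            | exact ⟨b, h2, h2'⟩
            | exact ⟨c, h2, h2'⟩
    · exact ⟨M0, hM0F⟩
  obtain ⟨u, hu⟩ := hu
  -- key: every vertex not in S is equal to u or H-adjacent to u
  set S : Set V := {x : V | (G.Adj x a ∧ G.Adj x b) ∨ (G.Adj x a ∧ G.Adj x c) ∨
          (G.Adj x b ∧ G.Adj x c)} with hSdef
  have key : ∀ v : V, v ∉ S → v = u ∨ H.Adj u v := by
    intro v hv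
    -- find two of {a,b,c} that v is H-adjacent to (or v equal to), forming a
    -- clique containing a pair among {a,b,c} and v
    have step : ∃ p q : V, ((p = a ∧ q = b) ∨ (p = a ∧ q = c) ∨ (p = b ∧ q = c)) ∧
        H.IsClique {p, q, v} := by
      simp only [hSdef, Set.mem_setOf_eq, not_or, not_and_or] at hv
      obtain ⟨h1, h2, h3⟩ := hv
      by_cases hva : v = a
      · exact ⟨a, b, Or.inl ⟨rfl, rfl⟩, by
          subst hva
          exact habc.subset (by intro x hx; simp at hx ⊢; tauto)⟩
      · by_cases hvb : v = b
        · exact ⟨a, b, Or.inl ⟨rfl, rfl⟩, by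
            subst hvb
            exact habc.subset (by intro x hx; simp at hx ⊢; tauto)⟩
        · by_cases hvc : v = c
          · exact ⟨a, c, Or.inr (Or.inl ⟨rfl, rfl⟩), by
              subst hvc
              exact habc.subset (by intro x hx; simp at hx ⊢; tauto)⟩
          · -- v ∉ {a,b,c} : v is H-adjacent to at least two of a,b,c
            have adj_of : ∀ w : V, v ≠ w → ¬ G.Adj v w → H.Adj v w :=
              fun w hne hna => ⟨hne, hna⟩
            have : (H.Adj v a ∧ H.Adj v b) ∨ (H.Adj v a ∧ H.Adj v c) ∨
                (H.Adj v b ∧ H.Adj v c) := by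
              by_cases gva : G.Adj v a
              · have gvb : ¬ G.Adj v b := by tauto
                have gvc : ¬ G.Adj v c := by tauto
                exact Or.inr (Or.inr ⟨adj_of b hvb gvb, adj_of c hvc gvc⟩)
              · have hva' := adj_of a hva gva
                rcases h3 with gvb | gvc
                · exact Or.inl ⟨hva', adj_of b hvb gvb⟩
                · exact Or.inr (Or.inl ⟨hva', adj_of c hvc gvc⟩)
            have mkcl : ∀ p q : V, H.Adj p q → H.Adj v p → H.Adj v q →
                H.IsClique {p, q, v} := by
              intro p q hpq hvp hvq x hx y hy hxy
              simp only [Set.mem_insert_iff, Set.mem_singleton_iff] at hx hy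
              rcases hx with rfl | rfl | rfl <;> rcases hy with rfl | rfl | rfl <;>
                first
                  | exact absurd rfl hxy
                  | assumption
                  | exact hpq.symm
                  | exact hvp.symm
                  | exact hvq.symm
            rcases this with ⟨h, h'⟩ | ⟨h, h'⟩ | ⟨h, h'⟩
            · exact ⟨a, b, Or.inl ⟨rfl, rfl⟩, mkcl a b Hab h h'⟩
            · exact ⟨a, c, Or.inr (Or.inl ⟨rfl, rfl⟩), mkcl a c Hac h h'⟩
            · exact ⟨b, c, Or.inr (Or.inr ⟨rfl, rfl⟩), mkcl b c Hbc h h'⟩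
    obtain ⟨p, q, hpq, hcl⟩ := step
    obtain ⟨M, hM, hMsub⟩ := exists_maxclique_superset H hcl
    have hMF : M ∈ F := by
      refine ⟨hM, ?_⟩
      have hp : p ∈ M := hMsub (by simp)
      have hq : q ∈ M := hMsub (by simp)
      rcases hpq with ⟨rfl, rfl⟩ | ⟨rfl, rfl⟩ | ⟨rfl, rfl⟩ <;> tauto
    have huM : u ∈ M := hu M hMF
    have hvM : v ∈ M := hMsub (by simp)
    by_cases huv : u = v
    · exact Or.inl huv.symm
    · exact Or.inr (hM.1 huM hvM huv)
  -- counting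
  have hcompl : Sᶜ ⊆ insert u (H.neighborSet u) := by
    intro v hv
    rcases key v hv with rfl | h
    · exact Set.mem_insert _ _
    · exact Set.mem_insert_of_mem _ h
  have hkreg : H.IsRegularOfDegree (Fintype.card V - 1 - k) := hk.compl
  have hdeg : (H.neighborSet u).ncard = Fintype.card V - 1 - k := by
    rw [Set.ncard_eq_toFinset_card', Set.toFinset_card, card_neighborSet_eq_degree]
    exact hkreg u
  have hklt : k < Fintype.card V := by
    have := G.degree_lt_card_verts a
    rwa [hk a] at this
  have hcard1 : Sᶜ.ncard ≤ 1 + (Fintype.card V - 1 - k) := by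
    calc Sᶜ.ncard ≤ (insert u (H.neighborSet u)).ncard :=
          Set.ncard_le_ncard hcompl (Set.toFinite _)
      _ ≤ 1 + (H.neighborSet u).ncard := by
          rw [Set.insert_eq]
          exact le_trans (Set.ncard_union_le _ _) (by simp)
      _ = 1 + (Fintype.card V - 1 - k) := by rw [hdeg]
  have htot : S.ncard + Sᶜ.ncard = Fintype.card V := by
    rw [Set.ncard_add_ncard_compl, Nat.card_eq_fintype_card]
  omega
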